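/- arXiv:1504.05987 — 2 statements merged into one kernel-verified Lean document; each statement's English description precedes it below -/
import Mathlib

section
/- Let G be a connected simple graph and c a 2-coloring of its edges. For any two vertices u and v of G, the minimal number of color changes over all walks in G from u to v equals the minimal distance in the component graph Comp(G,c) between a monochromatic component containing u and a monochromatic component containing v. -/
open SimpleGraph

variable {V : Type*}

/-- The spanning subgraph of `G` consisting of the edges of color `t`. -/
def monoSubgraph (G : SimpleGraph V) (c : Sym2 V → Bool) (t : Bool) : SimpleGraph V where
  Adj u v := G.Adj u v ∧ c s(u, v) = t
  symm := ⟨fun u v h => ⟨h.1.symm, by rw [Sym2.eq_swap]; exact h.2⟩⟩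
  loopless := ⟨fun u h => G.loopless.irrefl u h.1⟩

/-- A monochromatic component of `(G, c)`: a color together with a connected component
of the spanning subgraph of edges of that color. -/
abbrev MonoComp (G : SimpleGraph V) (c : Sym2 V → Bool) :=
  Σ t : Bool, (monoSubgraph G c t).ConnectedComponent

/-- The vertex `x` belongs to the monochromatic component `a`. -/
def MonoComp.Mem {G : SimpleGraph V} {c : Sym2 V → Bool} (a : MonoComp G c) (x : V) : Prop :=
  (monoSubgraph G c a.1).connectedComponentMk x = a.2

/-- The component graph `Comp(G, c)`: vertices are the monochromatic components,
two of them adjacent iff they are distinct and share a vertex of `G`. -/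
def compGraph (G : SimpleGraph V) (c : Sym2 V → Bool) : SimpleGraph (MonoComp G c) where
  Adj a b := a ≠ b ∧ ∃ x : V, a.Mem x ∧ b.Mem x
  symm := ⟨fun a b h => ⟨h.1.symm, h.2.imp fun x hx => ⟨hx.2, hx.1⟩⟩⟩
  loopless := ⟨fun a h => h.1 rfl⟩

/-- The number of color changes along a list of edges: the number of consecutive
pairs receiving different colors. -/
def colorChanges (c : Sym2 V → Bool) : List (Sym2 V) → ℕ
  | e₁ :: e₂ :: rest => (if c e₁ = c e₂ then 0 else 1) + colorChanges c (e₂ :: rest)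
  | _ => 0

lemma colorChanges_cons_le (c : Sym2 V → Bool) (e : Sym2 V) (l : List (Sym2 V)) :
    colorChanges c l ≤ colorChanges c (e :: l) := by
  cases l with
  | nil => simp [colorChanges]
  | cons e' r => simp only [colorChanges]; exact Nat.le_add_left _ _

lemma colorChanges_eq_zero {c : Sym2 V → Bool} {t : Bool} :
    ∀ {l : List (Sym2 V)}, (∀ e ∈ l, c e = t) → colorChanges c l = 0
  | [], _ => rfl
  | [e], _ => rfl
  | e :: e' :: r, h => by
    have h1 := h e (by simp)
    have h2 := h e' (by simp)
    have := colorChanges_eq_zero (c := c) (t := t) (l := e' :: r)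
      (fun x hx => h x (List.mem_cons_of_mem _ hx))
    simp [colorChanges, h1, h2, this]

lemma colorChanges_append_le (c : Sym2 V → Bool) :
    ∀ (l1 l2 : List (Sym2 V)),
      colorChanges c (l1 ++ l2) ≤ colorChanges c l1 + 1 + colorChanges c l2
  | [], l2 => by simp [colorChanges]
  | [e], l2 => by
    cases l2 with
    | nil => simp [colorChanges]
    | cons e' r =>
      simp only [List.singleton_append, colorChanges]
      split <;> omega
  | e :: e' :: r, l2 => by
    have ih := colorChanges_append_le c (e' :: r) l2
    simp only [List.cons_append] at *
    simp only [colorChanges] at *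
    split <;> omega

variable {G : SimpleGraph V} {c : Sym2 V → Bool}

/-- Any walk in the subgraph of edges of color `t` yields a walk in `G`
all of whose edges have color `t`. -/
lemma exists_walk_mono {t : Bool} : ∀ {x y : V} (_w : (monoSubgraph G c t).Walk x y),
    ∃ w' : G.Walk x y, ∀ e ∈ w'.edges, c e = t
  | _, _, .nil => ⟨.nil, by simp⟩
  | _, _, .cons h p => by
    obtain ⟨w', hw'⟩ := exists_walk_mono p
    refine ⟨.cons h.1 w', ?_⟩
    intro e he
    rw [Walk.edges_cons] at he
    rcases List.mem_cons.mp he with rfl | he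
    · exact h.2
    · exact hw' e he

/-- From a walk in `G` one builds a walk in the component graph whose length is at most
the number of color changes, starting at the `t`-component of `u` where `t` matches the
color of the first edge (if any). -/
lemma exists_compWalk {u v : V} (w : G.Walk u v) :
    ∀ t : Bool, (∀ e ∈ w.edges.head?, c e = t) →
      ∃ (b : MonoComp G c)
        (P : (compGraph G c).Walk ⟨t, (monoSubgraph G c t).connectedComponentMk u⟩ b),
        b.Mem v ∧ P.length ≤ colorChanges c w.edges := by
  induction w with
  | nil =>
    intro t _
    exact ⟨⟨t, _⟩, Walk.nil, rfl, by simp⟩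
  | @cons u x v h p ih =>
    intro t ht
    have htc : c s(u, x) = t := ht _ (by simp [Walk.edges_cons])
    have hmk : (monoSubgraph G c t).connectedComponentMk u
        = (monoSubgraph G c t).connectedComponentMk x :=
      ConnectedComponent.sound (Adj.reachable ⟨h, htc⟩)
    cases hpe : p.edges with
    | nil =>
      obtain ⟨b, P, hb, hP⟩ := ih t (by rw [hpe]; simp)
      refine ⟨b, P.copy (congrArg (Sigma.mk t) hmk).symm rfl, hb, ?_⟩
      rw [Walk.length_copy, Walk.edges_cons]
      exact hP.trans (colorChanges_cons_le c _ _)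
    | cons e r =>
      obtain ⟨b, P, hb, hP⟩ := ih (c e) (by rw [hpe]; simp)
      by_cases htt : c e = t
      · subst htt
        refine ⟨b, P.copy (congrArg (fun comp => (⟨c e, comp⟩ : MonoComp G c)) hmk).symm rfl,
          hb, ?_⟩
        rw [Walk.length_copy, Walk.edges_cons]
        exact hP.trans (colorChanges_cons_le c _ _)
      · have hA : (compGraph G c).Adj ⟨t, (monoSubgraph G c t).connectedComponentMk u⟩
            ⟨c e, (monoSubgraph G c (c e)).connectedComponentMk x⟩ := by
          refine ⟨?_, x, hmk.symm, rfl⟩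
          intro hcon
          exact htt (congrArg Sigma.fst hcon).symm
        refine ⟨b, Walk.cons hA P, hb, ?_⟩
        rw [Walk.length_cons, Walk.edges_cons, hpe]
        rw [hpe] at hP
        have : colorChanges c (s(u, x) :: e :: r) = 1 + colorChanges c (e :: r) := by
          have : ¬ c s(u,x) = c e := by rw [htc]; exact fun hh => htt hh.symm
          simp [colorChanges, this]
        omega

/-- From a walk in the component graph one builds a walk in `G` with at most as many
color changes as the length of the component walk. -/
lemma walk_of_compWalk : ∀ {a b : MonoComp G c} (P : (compGraph G c).Walk a b) {u v : V},
    a.Mem u → b.Mem v → ∃ w : G.Walk u v, colorChanges c w.edges ≤ P.length := by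
  intro a b P
  induction P with
  | nil =>
    intro u v hu hv
    have hr : (monoSubgraph G c _).Reachable u v := ConnectedComponent.exact (hu.trans hv.symm)
    obtain ⟨w0⟩ := hr
    obtain ⟨w', hw'⟩ := exists_walk_mono w0
    exact ⟨w', by rw [colorChanges_eq_zero hw']; simp⟩
  | @cons a a' b hA P ih =>
    intro u v hu hv
    obtain ⟨hne, x, hax, ha'x⟩ := id hA
    have hr : (monoSubgraph G c a.1).Reachable u x := ConnectedComponent.exact (hu.trans hax.symm)
    obtain ⟨w0⟩ := hr
    obtain ⟨w1, hw1⟩ := exists_walk_mono w0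
    obtain ⟨w2, hw2⟩ := ih ha'x hv
    refine ⟨w1.append w2, ?_⟩
    rw [Walk.edges_append, Walk.length_cons]
    have := colorChanges_append_le c w1.edges w2.edges
    rw [colorChanges_eq_zero hw1] at this
    omega

lemma reachable_of_mem_mem {a b : MonoComp G c} {x : V} (ha : a.Mem x) (hb : b.Mem x) :
    (compGraph G c).Reachable a b := by
  by_cases h : a = b
  · exact h ▸ Reachable.refl a
  · exact (Adj.reachable ⟨h, x, ha, hb⟩)

/-- If `G` is connected, any two monochromatic components are reachable from each other in
the component graph. -/
lemma mem_reachable (hG : G.Connected) {a b : MonoComp G c} {u v : V}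
    (ha : a.Mem u) (hb : b.Mem v) : (compGraph G c).Reachable a b := by
  obtain ⟨w⟩ := hG.preconnected u v
  have key : ∃ t : Bool, ∀ e ∈ w.edges.head?, c e = t := by
    cases hpe : w.edges with
    | nil => exact ⟨true, by simp⟩
    | cons e r => exact ⟨c e, by simp⟩
  obtain ⟨t, ht⟩ := key
  obtain ⟨b', P, hb', _⟩ := exists_compWalk w t ht
  have h1 : (compGraph G c).Reachable a ⟨t, (monoSubgraph G c t).connectedComponentMk u⟩ :=
    reachable_of_mem_mem ha rfl
  exact (h1.trans P.reachable).trans (reachable_of_mem_mem hb' hb)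

/-- In a connected graph `G` with 2-coloring `c`, the minimal number
of color changes over all walks from `u` to `v` equals the minimal distance in the
component graph between a monochromatic component containing `u` and one
containing `v`. -/
theorem min_colorChanges_eq_min_compGraph_dist
    {V : Type*} (G : SimpleGraph V) (hG : G.Connected) (c : Sym2 V → Bool) (u v : V) :
    sInf {n : ℕ | ∃ w : G.Walk u v, colorChanges c w.edges = n} =
      sInf {n : ℕ | ∃ a b : MonoComp G c,
        a.Mem u ∧ b.Mem v ∧ (compGraph G c).dist a b = n} := by
  apply le_antisymm
  · have hne2 : {n : ℕ | ∃ a b : MonoComp G c,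
        a.Mem u ∧ b.Mem v ∧ (compGraph G c).dist a b = n}.Nonempty :=
      ⟨_, ⟨true, (monoSubgraph G c true).connectedComponentMk u⟩,
        ⟨true, (monoSubgraph G c true).connectedComponentMk v⟩, rfl, rfl, rfl⟩
    obtain ⟨a, b, ha, hb, hd⟩ := Nat.sInf_mem hne2
    obtain ⟨P, hP⟩ := (mem_reachable hG ha hb).exists_walk_length_eq_dist
    obtain ⟨w, hw⟩ := walk_of_compWalk P ha hb
    calc sInf {n : ℕ | ∃ w : G.Walk u v, colorChanges c w.edges = n}
        ≤ colorChanges c w.edges := Nat.sInf_le ⟨w, rfl⟩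
      _ ≤ P.length := hw
      _ = _ := by rw [hP, hd]
  · have hne1 : {n : ℕ | ∃ w : G.Walk u v, colorChanges c w.edges = n}.Nonempty := by
      obtain ⟨w⟩ := hG.preconnected u v
      exact ⟨_, w, rfl⟩
    obtain ⟨w, hw⟩ := Nat.sInf_mem hne1
    have key : ∃ t : Bool, ∀ e ∈ w.edges.head?, c e = t := by
      cases hpe : w.edges with
      | nil => exact ⟨true, by simp⟩
      | cons e r => exact ⟨c e, by simp⟩
    obtain ⟨t, ht⟩ := key
    obtain ⟨b', P, hb', hP⟩ := exists_compWalk w t ht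
    calc sInf {n : ℕ | ∃ a b : MonoComp G c,
          a.Mem u ∧ b.Mem v ∧ (compGraph G c).dist a b = n}
        ≤ (compGraph G c).dist ⟨t, (monoSubgraph G c t).connectedComponentMk u⟩ b' :=
          Nat.sInf_le ⟨⟨t, (monoSubgraph G c t).connectedComponentMk u⟩, b', rfl, hb', rfl⟩
      _ ≤ P.length := SimpleGraph.dist_le P
      _ ≤ colorChanges c w.edges := hP
      _ = _ := hw
end

section
/- Let c be a 2-coloring of the edges of the hypercube Q_n such that the component graph Comp(Q_n,c) is acyclic (a tree). Then there exists a vertex u of Q_n and a monochromatic walk in Q_n from u to its antipodal pair. -/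
open SimpleGraph

variable {V : Type*}

/-- The hypercube graph `Q n`: vertices are `Fin n → Bool`, two vertices adjacent iff
they differ in exactly one coordinate. -/
def cubeGraph (n : ℕ) : SimpleGraph (Fin n → Bool) where
  Adj u v := hammingDist u v = 1
  symm := ⟨fun u v h => by rwa [hammingDist_comm]⟩
  loopless := ⟨fun u h => by
    simp only [hammingDist_self] at h; exact absurd h (by norm_num)⟩

/-- The antipodal pair of a vertex of the hypercube. -/
def antipode {n : ℕ} (u : Fin n → Bool) : Fin n → Bool := fun i => !(u i)

namespace AntipodalAux

open Relation

variable {n : ℕ} {c : Sym2 (Fin n → Bool) → Bool}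

lemma antipode_antipode (u : Fin n → Bool) : antipode (antipode u) = u := by
  funext i; simp [antipode]

lemma hammingDist_antipode (u v : Fin n → Bool) :
    hammingDist (antipode u) (antipode v) = hammingDist u v := by
  unfold hammingDist
  congr 1
  apply Finset.filter_congr
  intro i _
  cases h1 : u i <;> cases h2 : v i <;> simp [antipode, h1, h2]

lemma cube_adj_antipode {u v : Fin n → Bool} (h : (cubeGraph n).Adj u v) :
    (cubeGraph n).Adj (antipode u) (antipode v) := by
  have h' : hammingDist u v = 1 := h
  show hammingDist (antipode u) (antipode v) = 1
  rwa [hammingDist_antipode]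

lemma cube_preconnected : (cubeGraph n).Preconnected := by
  intro u v
  suffices h : ∀ k u, hammingDist u v = k → (cubeGraph n).Reachable u v from h _ u rfl
  intro k
  induction k with
  | zero =>
    intro u hd
    rw [hammingDist_eq_zero] at hd
    exact hd ▸ Reachable.refl u
  | succ k ih =>
    intro u hd
    have hne : (Finset.univ.filter fun i => u i ≠ v i).Nonempty := by
      apply Finset.card_pos.mp
      rw [show (Finset.univ.filter fun i => u i ≠ v i).card = hammingDist u v from rfl, hd]
      omega
    obtain ⟨i, hi⟩ := hne
    have hiv : u i ≠ v i := (Finset.mem_filter.mp hi).2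
    set u' := Function.update u i (v i) with hu'
    have hadj : (cubeGraph n).Adj u u' := by
      show hammingDist u u' = 1
      have hfe : (Finset.univ.filter fun j => u j ≠ u' j) = {i} := by
        ext j
        by_cases hj : j = i
        · subst hj; simp [hu', hiv]
        · simp [hu', Function.update_of_ne hj, hj]
      show (Finset.univ.filter fun j => u j ≠ u' j).card = 1
      rw [hfe, Finset.card_singleton]
    have hd' : hammingDist u' v = k := by
      have hfe : (Finset.univ.filter fun j => u' j ≠ v j)
          = (Finset.univ.filter fun j => u j ≠ v j).erase i := by
        ext j
        by_cases hj : j = i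
        · subst hj; simp [hu']
        · simp [hu', Function.update_of_ne hj, hj]
      show (Finset.univ.filter fun j => u' j ≠ v j).card = k
      rw [hfe, Finset.card_erase_of_mem hi,
        show (Finset.univ.filter fun j => u j ≠ v j).card = hammingDist u v from rfl, hd]
      omega
    exact (hadj.reachable).trans (ih u' hd')


/-- The monochromatic component of color `t` containing `u`. -/
def K (c : Sym2 (Fin n → Bool) → Bool) (t : Bool) (u : Fin n → Bool) :
    MonoComp (cubeGraph n) c :=
  ⟨t, (monoSubgraph (cubeGraph n) c t).connectedComponentMk u⟩

lemma K_mem (t : Bool) (u : Fin n → Bool) : (K c t u).Mem u := rfl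

lemma mem_elim {x : MonoComp (cubeGraph n) c} {u : Fin n → Bool} (h : x.Mem u) :
    x = K c x.1 u := by
  obtain ⟨t, C⟩ := x
  exact congrArg (Sigma.mk t) h.symm

lemma K_eq_of_adj {t : Bool} {u v : Fin n → Bool}
    (h : (monoSubgraph (cubeGraph n) c t).Adj u v) : K c t u = K c t v :=
  congrArg (Sigma.mk t) (ConnectedComponent.sound h.reachable)

lemma adj_K {t s : Bool} (u : Fin n → Bool) (hts : t ≠ s) :
    (compGraph (cubeGraph n) c).Adj (K c t u) (K c s u) :=
  ⟨fun h => hts (congrArg Sigma.fst h), u, rfl, rfl⟩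

lemma reachable_K (t s : Bool) (u : Fin n → Bool) :
    (compGraph (cubeGraph n) c).Reachable (K c t u) (K c s u) := by
  by_cases h : t = s
  · subst h; rfl
  · exact (adj_K u h).reachable

lemma comp_adj_ne_fst {a b : MonoComp (cubeGraph n) c}
    (h : (compGraph (cubeGraph n) c).Adj a b) : a.1 ≠ b.1 := by
  intro hfst
  obtain ⟨hne, v, ha, hb⟩ := h
  exact hne ((mem_elim ha).trans (by rw [hfst]; exact (mem_elim hb).symm))

lemma reachable_along : ∀ {u v : Fin n → Bool} (_ : (cubeGraph n).Walk u v) (t s : Bool),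
    (compGraph (cubeGraph n) c).Reachable (K c t u) (K c s v) := by
  intro u v W
  induction W with
  | nil => exact fun t s => reachable_K t s _
  | @cons u w v h W ih =>
    intro t s
    have h1 : K c (c s(u, w)) u = K c (c s(u, w)) w := K_eq_of_adj ⟨h, rfl⟩
    exact (reachable_K t (c s(u, w)) u).trans (h1 ▸ ih (c s(u, w)) s)

lemma comp_rep (x : MonoComp (cubeGraph n) c) : x.Mem x.2.out := by
  show _ = x.2
  exact x.2.out_eq

lemma comp_preconnected : (compGraph (cubeGraph n) c).Preconnected := by
  intro x y
  obtain ⟨W⟩ := cube_preconnected (n := n) x.2.out y.2.out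
  have hx := mem_elim (comp_rep x)
  have hy := mem_elim (comp_rep y)
  rw [hx, hy]
  exact reachable_along W x.1 y.1

lemma comp_connected : (compGraph (cubeGraph n) c).Connected :=
  haveI : Nonempty (MonoComp (cubeGraph n) c) := ⟨K c true (fun _ => false)⟩
  ⟨comp_preconnected⟩

lemma mono_le (t : Bool) : monoSubgraph (cubeGraph n) c t ≤ cubeGraph n :=
  fun _ _ h => h.1

lemma mono_edge_color {t : Bool} {e : Sym2 (Fin n → Bool)}
    (he : e ∈ (monoSubgraph (cubeGraph n) c t).edgeSet) : c e = t := by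
  induction e with
  | h a b => exact he.2

section WithH

variable (H : ∀ (u : Fin n → Bool) (w : (cubeGraph n).Walk u (antipode u)) (t : Bool),
    ¬ ∀ e ∈ w.edges, c e = t)

include H

lemma comp_not_antipodal (x : MonoComp (cubeGraph n) c) (u : Fin n → Bool)
    (h1 : x.Mem u) (h2 : x.Mem (antipode u)) : False := by
  obtain ⟨t, C⟩ := x
  have hr : (monoSubgraph (cubeGraph n) c t).Reachable u (antipode u) :=
    ConnectedComponent.exact (h1.trans h2.symm)
  obtain ⟨W⟩ := hr
  have hsub : ∀ e ∈ W.edges, e ∈ (cubeGraph n).edgeSet := fun e he =>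
    SimpleGraph.edgeSet_mono (mono_le t) (W.edges_subset_edgeSet he)
  refine H u (W.transfer (cubeGraph n) hsub) t ?_
  intro e he
  rw [SimpleGraph.Walk.edges_transfer] at he
  exact mono_edge_color (W.edges_subset_edgeSet he)

/-- The relation: adjacent in the component graph and both avoid `x`. -/
def Ax (x p q : MonoComp (cubeGraph n) c) : Prop :=
  (compGraph (cubeGraph n) c).Adj p q ∧ p ≠ x ∧ q ≠ x

omit H in
lemma Ax_symm {x p q : MonoComp (cubeGraph n) c} (h : Ax x p q) : Ax x q p :=
  ⟨h.1.symm, h.2.2, h.2.1⟩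

lemma transport {x : MonoComp (cubeGraph n) c} {u v : Fin n → Bool}
    (W : (monoSubgraph (cubeGraph n) c x.1).Walk u v) :
    x.Mem u → ∀ p q : MonoComp (cubeGraph n) c, p.Mem (antipode u) → q.Mem (antipode v) →
      ReflTransGen (Ax x) p q := by
  induction W with
  | nil =>
    intro hu p q hp hq
    by_cases hpq : p = q
    · exact hpq ▸ ReflTransGen.refl
    · refine ReflTransGen.single ⟨⟨hpq, _, hp, hq⟩, ?_, ?_⟩
      · rintro rfl; exact comp_not_antipodal H _ _ hu hp
      · rintro rfl; exact comp_not_antipodal H _ _ hu hq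
  | @cons u w v h W ih =>
    intro hu p q hp hq
    have hw : x.Mem w := by
      show _ = x.2
      exact (ConnectedComponent.sound h.reachable).symm.trans hu
    have hadj : (cubeGraph n).Adj (antipode u) (antipode w) := cube_adj_antipode h.1
    set t' := c s(antipode u, antipode w) with ht'
    have hz : (K c t' (antipode u)) = K c t' (antipode w) := K_eq_of_adj ⟨hadj, rfl⟩
    have step1 : ReflTransGen (Ax x) p (K c t' (antipode u)) := by
      by_cases hpz : p = K c t' (antipode u)
      · exact hpz ▸ ReflTransGen.refl
      · refine ReflTransGen.single ⟨⟨hpz, antipode u, hp, K_mem t' (antipode u)⟩, ?_, ?_⟩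
        · rintro rfl; exact comp_not_antipodal H _ _ hu hp
        · rintro rfl; exact comp_not_antipodal H _ _ hu (K_mem t' (antipode u))
    have step2 : ReflTransGen (Ax x) (K c t' (antipode w)) q :=
      ih hw (K c t' (antipode w)) q (K_mem t' (antipode w)) hq
    exact step1.trans (hz ▸ step2)

/-- Fixed "basepoint" component among the components of the antipode of a
representative of `x`. -/
noncomputable def p0 (x : MonoComp (cubeGraph n) c) : MonoComp (cubeGraph n) c :=
  K c true (antipode x.2.out)

lemma p0_ne (x : MonoComp (cubeGraph n) c) : p0 (c := c) x ≠ x := by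
  intro h
  have hm : (p0 (c := c) x).Mem (antipode x.2.out) := K_mem true (antipode x.2.out)
  rw [h] at hm
  exact comp_not_antipodal H x x.2.out (comp_rep x) hm

lemma reach_comp (x : MonoComp (cubeGraph n) c) (u : Fin n → Bool)
    (p : MonoComp (cubeGraph n) c) (hu : x.Mem u) (hp : p.Mem (antipode u)) :
    ReflTransGen (Ax x) (p0 x) p := by
  have hr : (monoSubgraph (cubeGraph n) c x.1).Reachable x.2.out u :=
    ConnectedComponent.exact ((comp_rep x).trans hu.symm)
  obtain ⟨W⟩ := hr
  exact transport H W (comp_rep x) (p0 x) p (K_mem true (antipode x.2.out)) hp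

omit H in
lemma first_hit {x p : MonoComp (cubeGraph n) c} (W : (compGraph (cubeGraph n) c).Walk p x) :
    p ≠ x → ∃ y, (compGraph (cubeGraph n) c).Adj y x ∧ ReflTransGen (Ax x) p y := by
  induction W with
  | nil => intro h; exact absurd rfl h
  | @cons p w x h W ih =>
    intro hpx
    by_cases hw : w = x
    · subst hw; exact ⟨p, h, ReflTransGen.refl⟩
    · obtain ⟨y, hy, hr⟩ := ih hw
      exact ⟨y, hy, ReflTransGen.head ⟨h, hpx, hw⟩ hr⟩

lemma exists_arrow (x : MonoComp (cubeGraph n) c) :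
    ∃ y, (compGraph (cubeGraph n) c).Adj x y ∧ ReflTransGen (Ax x) (p0 x) y := by
  obtain ⟨W⟩ := comp_preconnected (c := c) (p0 x) x
  obtain ⟨y, hyx, hr⟩ := first_hit W (p0_ne H x)
  exact ⟨y, hyx.symm, hr⟩

omit H in
lemma rtg_symm {x p q : MonoComp (cubeGraph n) c} (h : ReflTransGen (Ax x) p q) :
    ReflTransGen (Ax x) q p := by
  induction h with
  | refl => exact ReflTransGen.refl
  | tail _ hbc ih => exact ReflTransGen.head (Ax_symm hbc) ih

omit H in
lemma rtg_walk {x p q : MonoComp (cubeGraph n) c} (h : ReflTransGen (Ax x) p q)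
    (hp : p ≠ x) : ∃ W : (compGraph (cubeGraph n) c).Walk p q, x ∉ W.support := by
  induction h with
  | refl => exact ⟨SimpleGraph.Walk.nil, by simp [Ne.symm hp]⟩
  | @tail b q _ hbc ih =>
    obtain ⟨W, hW⟩ := ih
    refine ⟨W.concat hbc.1, ?_⟩
    rw [SimpleGraph.Walk.support_concat]
    intro hmem
    rw [List.mem_append] at hmem
    rcases hmem with h1 | h2
    · exact hW h1
    · have hxq : x = q := by simpa using h2
      exact hbc.2.2 hxq.symm

end WithH

lemma walk_parity : ∀ {a b : MonoComp (cubeGraph n) c}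
    (W : (compGraph (cubeGraph n) c).Walk a b), (a.1 = b.1 ↔ Even W.length) := by
  intro a b W
  induction W with
  | nil => simp
  | @cons a w b h W ih =>
    have h1 : a.1 ≠ w.1 := comp_adj_ne_fst h
    rw [SimpleGraph.Walk.length_cons, Nat.even_add_one, ← ih]
    cases ha : a.1 <;> cases hw : w.1 <;> cases hb : b.1 <;> simp_all

lemma dist_parity (z a : MonoComp (cubeGraph n) c) :
    (z.1 = a.1 ↔ Even ((compGraph (cubeGraph n) c).dist z a)) := by
  obtain ⟨W, hW⟩ := (comp_preconnected (c := c) z a).exists_walk_length_eq_dist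
  rw [← hW]
  exact walk_parity W

lemma adj_dist_step (z : MonoComp (cubeGraph n) c) {a b : MonoComp (cubeGraph n) c}
    (h : (compGraph (cubeGraph n) c).Adj a b) :
    (compGraph (cubeGraph n) c).dist z b = (compGraph (cubeGraph n) c).dist z a + 1 ∨
    (compGraph (cubeGraph n) c).dist z a = (compGraph (cubeGraph n) c).dist z b + 1 := by
  have hab : (compGraph (cubeGraph n) c).dist a b ≤ 1 :=
    SimpleGraph.dist_le (SimpleGraph.Walk.cons h SimpleGraph.Walk.nil)
  have hba : (compGraph (cubeGraph n) c).dist b a ≤ 1 :=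
    SimpleGraph.dist_le (SimpleGraph.Walk.cons h.symm SimpleGraph.Walk.nil)
  have t1 : (compGraph (cubeGraph n) c).dist z b ≤
      (compGraph (cubeGraph n) c).dist z a + 1 :=
    le_trans (comp_connected.dist_triangle (v := a)) (by omega)
  have t2 : (compGraph (cubeGraph n) c).dist z a ≤
      (compGraph (cubeGraph n) c).dist z b + 1 :=
    le_trans (comp_connected.dist_triangle (v := b)) (by omega)
  have hne : (compGraph (cubeGraph n) c).dist z a ≠ (compGraph (cubeGraph n) c).dist z b := by
    intro hEq
    have p1 := dist_parity z a
    have p2 := dist_parity z b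
    have hfst : a.1 ≠ b.1 := comp_adj_ne_fst h
    rw [hEq] at p1
    have hiff := p1.trans p2.symm
    clear p1 p2 t1 t2 hab hba hEq h
    cases hz : z.1 <;> cases ha : a.1 <;> cases hb : b.1 <;> simp_all
  omega

lemma dist_le_of_mem_support {z v w : MonoComp (cubeGraph n) c}
    (W : (compGraph (cubeGraph n) c).Walk z v) (h : w ∈ W.support) :
    (compGraph (cubeGraph n) c).dist z w ≤ W.length := by
  induction W with
  | nil =>
    simp at h
    subst h
    simp [SimpleGraph.dist_self]
  | @cons z u v hadj W ih =>
    rw [SimpleGraph.Walk.support_cons] at h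
    rcases List.mem_cons.mp h with h1 | h2
    · subst h1; simp [SimpleGraph.dist_self]
    · have hzu : (compGraph (cubeGraph n) c).dist z u ≤ 1 :=
        SimpleGraph.dist_le (SimpleGraph.Walk.cons hadj SimpleGraph.Walk.nil)
      have := comp_connected.dist_triangle (u := z) (v := u) (w := w)
      have := ih h2
      rw [SimpleGraph.Walk.length_cons]
      omega

lemma unique_parent (hc : (compGraph (cubeGraph n) c).IsAcyclic)
    (z : MonoComp (cubeGraph n) c) {b y y' : MonoComp (cubeGraph n) c}
    (hy : (compGraph (cubeGraph n) c).Adj y b) (hy' : (compGraph (cubeGraph n) c).Adj y' b)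
    (h1 : (compGraph (cubeGraph n) c).dist z y + 1 = (compGraph (cubeGraph n) c).dist z b)
    (h2 : (compGraph (cubeGraph n) c).dist z y' + 1 = (compGraph (cubeGraph n) c).dist z b) :
    y = y' := by
  classical
  obtain ⟨Wy, hWy⟩ := (comp_preconnected (c := c) z y).exists_walk_length_eq_dist
  obtain ⟨Wy', hWy'⟩ := (comp_preconnected (c := c) z y').exists_walk_length_eq_dist
  set Py := Wy.bypass with hPy
  set Py' := Wy'.bypass with hPy'
  have hlen : Py.length ≤ (compGraph (cubeGraph n) c).dist z y :=
    hWy ▸ SimpleGraph.Walk.length_bypass_le Wy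
  have hlen' : Py'.length ≤ (compGraph (cubeGraph n) c).dist z y' :=
    hWy' ▸ SimpleGraph.Walk.length_bypass_le Wy'
  have hb : b ∉ Py.support := by
    intro hmem
    have := dist_le_of_mem_support Py hmem
    omega
  have hb' : b ∉ Py'.support := by
    intro hmem
    have := dist_le_of_mem_support Py' hmem
    omega
  have hQ : (SimpleGraph.Walk.cons hy.symm Py.reverse).IsPath := by
    rw [SimpleGraph.Walk.cons_isPath_iff]
    refine ⟨(Wy.bypass_isPath).reverse, ?_⟩
    rw [SimpleGraph.Walk.support_reverse, List.mem_reverse]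
    exact hb
  have hQ' : (SimpleGraph.Walk.cons hy'.symm Py'.reverse).IsPath := by
    rw [SimpleGraph.Walk.cons_isPath_iff]
    refine ⟨(Wy'.bypass_isPath).reverse, ?_⟩
    rw [SimpleGraph.Walk.support_reverse, List.mem_reverse]
    exact hb'
  have heq := hc.path_unique ⟨_, hQ⟩ ⟨_, hQ'⟩
  have heqw : (SimpleGraph.Walk.cons hy.symm Py.reverse)
      = (SimpleGraph.Walk.cons hy'.symm Py'.reverse) := congrArg Subtype.val heq
  have hv1 : (SimpleGraph.Walk.cons hy.symm Py.reverse).getVert 1 = y := by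
    rw [SimpleGraph.Walk.getVert_cons_succ, SimpleGraph.Walk.getVert_zero]
  have hv2 : (SimpleGraph.Walk.cons hy'.symm Py'.reverse).getVert 1 = y' := by
    rw [SimpleGraph.Walk.getVert_cons_succ, SimpleGraph.Walk.getVert_zero]
  rw [← hv1, ← hv2, heqw]

lemma mono_comp_finite : Finite (MonoComp (cubeGraph n) c) := by
  have : ∀ t : Bool, Finite ((monoSubgraph (cubeGraph n) c t).ConnectedComponent) := by
    intro t
    exact Finite.of_surjective ((monoSubgraph (cubeGraph n) c t).connectedComponentMk)
      Quot.mk_surjective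
  exact Finite.instSigma

end AntipodalAux

/-- If the component graph of a 2-colored hypercube is acyclic
(a tree), then some vertex is joined to its antipodal pair by a monochromatic walk. -/
theorem exists_monochromatic_antipodal_walk_of_acyclic
    {n : ℕ} (c : Sym2 (Fin n → Bool) → Bool)
    (hc : (compGraph (cubeGraph n) c).IsAcyclic) :
    ∃ (u : Fin n → Bool) (w : (cubeGraph n).Walk u (antipode u)) (t : Bool),
      ∀ e ∈ w.edges, c e = t := by
  classical
  by_contra hcon
  have H : ∀ (u : Fin n → Bool) (w : (cubeGraph n).Walk u (antipode u)) (t : Bool),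
      ¬ ∀ e ∈ w.edges, c e = t := fun u w t h => hcon ⟨u, w, t, h⟩
  obtain ⟨nf, hadj, hrtg⟩ :
      ∃ nf : MonoComp (cubeGraph n) c → MonoComp (cubeGraph n) c,
        (∀ x, (compGraph (cubeGraph n) c).Adj x (nf x)) ∧
        (∀ x, Relation.ReflTransGen (AntipodalAux.Ax x) (AntipodalAux.p0 x) (nf x)) := by
    choose nf h1 h2 using fun x => AntipodalAux.exists_arrow H x
    exact ⟨nf, h1, h2⟩
  set z : MonoComp (cubeGraph n) c := AntipodalAux.K c true (fun _ => false) with hzdef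
  haveI : Finite (MonoComp (cubeGraph n) c) := AntipodalAux.mono_comp_finite
  haveI : Nonempty (MonoComp (cubeGraph n) c) := ⟨z⟩
  obtain ⟨xmax, hxmax⟩ :=
    Finite.exists_max (fun x : MonoComp (cubeGraph n) c => (compGraph (cubeGraph n) c).dist z x)
  set seq : ℕ → MonoComp (cubeGraph n) c := fun k => nf^[k] z with hseqdef
  have hseq : ∀ k, seq (k+1) = nf (seq k) := fun k => Function.iterate_succ_apply' nf k z
  have hstep : ∀ k, (compGraph (cubeGraph n) c).dist z (seq (k+1))
        = (compGraph (cubeGraph n) c).dist z (seq k) + 1 ∨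
      (compGraph (cubeGraph n) c).dist z (seq k)
        = (compGraph (cubeGraph n) c).dist z (seq (k+1)) + 1 := by
    intro k
    rw [hseq k]
    exact AntipodalAux.adj_dist_step z (hadj (seq k))
  have key : ∃ k, ((compGraph (cubeGraph n) c).dist z (seq (k+1))
        = (compGraph (cubeGraph n) c).dist z (seq k) + 1) ∧
      ((compGraph (cubeGraph n) c).dist z (seq (k+2)) + 1
        = (compGraph (cubeGraph n) c).dist z (seq (k+1))) := by
    by_contra hK
    push_neg at hK
    have hup : ∀ k, (compGraph (cubeGraph n) c).dist z (seq (k+1))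
          = (compGraph (cubeGraph n) c).dist z (seq k) + 1 →
        (compGraph (cubeGraph n) c).dist z (seq (k+2))
          = (compGraph (cubeGraph n) c).dist z (seq (k+1)) + 1 := by
      intro k hk
      rcases hstep (k+1) with h | h
      · exact h
      · exact absurd h.symm (hK k hk)
    by_cases hex : ∃ k, (compGraph (cubeGraph n) c).dist z (seq (k+1))
        = (compGraph (cubeGraph n) c).dist z (seq k) + 1
    · obtain ⟨k₀, h₀⟩ := hex
      have hupj : ∀ j, (compGraph (cubeGraph n) c).dist z (seq (k₀ + j + 1))
          = (compGraph (cubeGraph n) c).dist z (seq (k₀ + j)) + 1 := by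
        intro j
        induction j with
        | zero => exact h₀
        | succ j ihj =>
          have := hup (k₀ + j) ihj
          have harith : k₀ + (j+1) + 1 = k₀ + j + 2 := by omega
          have harith2 : k₀ + (j+1) = k₀ + j + 1 := by omega
          rw [harith, harith2]
          exact this
      have grow : ∀ j, (compGraph (cubeGraph n) c).dist z (seq (k₀ + j + 1))
          = (compGraph (cubeGraph n) c).dist z (seq (k₀ + 1)) + j := by
        intro j
        induction j with
        | zero => simp
        | succ j ihj =>
          have h1 := hupj (j + 1)
          have harith : k₀ + (j+1) = k₀ + j + 1 := by omega
          rw [harith] at h1 ⊢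
          omega
      have hb1 := hxmax (seq (k₀ + ((compGraph (cubeGraph n) c).dist z xmax + 1) + 1))
      have hb2 := grow ((compGraph (cubeGraph n) c).dist z xmax + 1)
      omega
    · push_neg at hex
      have hdown : ∀ k, (compGraph (cubeGraph n) c).dist z (seq k)
          = (compGraph (cubeGraph n) c).dist z (seq (k+1)) + 1 := by
        intro k
        rcases hstep k with h | h
        · exact absurd h (hex k)
        · exact h
      have decr : ∀ k, (compGraph (cubeGraph n) c).dist z (seq 0)
          = (compGraph (cubeGraph n) c).dist z (seq k) + k := by
        intro k
        induction k with
        | zero => simp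
        | succ k ihk =>
          have := hdown k
          omega
      have := decr ((compGraph (cubeGraph n) c).dist z (seq 0) + 1)
      omega
  obtain ⟨k, hk1, hk2⟩ := key
  have hadj1 : (compGraph (cubeGraph n) c).Adj (seq k) (seq (k+1)) := by
    rw [hseq k]; exact hadj (seq k)
  have hadj2 : (compGraph (cubeGraph n) c).Adj (seq (k+1)) (seq (k+2)) := by
    rw [hseq (k+1)]; exact hadj (seq (k+1))
  have hyy : seq k = seq (k+2) :=
    AntipodalAux.unique_parent hc z hadj1 hadj2.symm hk1.symm hk2
  have hnfx : nf (seq k) = seq (k+1) := (hseq k).symm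
  have hnfy : nf (seq (k+1)) = seq k := (hseq (k+1)).symm.trans hyy.symm
  obtain ⟨hne, u, hxu, hyu⟩ := id hadj1
  have r1 : Relation.ReflTransGen (AntipodalAux.Ax (seq k))
      (AntipodalAux.p0 (seq k)) (AntipodalAux.K c true (antipode u)) :=
    AntipodalAux.reach_comp H (seq k) u _ hxu rfl
  have r2 : Relation.ReflTransGen (AntipodalAux.Ax (seq k))
      (AntipodalAux.p0 (seq k)) (seq (k+1)) := hnfx ▸ hrtg (seq k)
  have r3 : Relation.ReflTransGen (AntipodalAux.Ax (seq (k+1)))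
      (AntipodalAux.p0 (seq (k+1))) (AntipodalAux.K c true (antipode u)) :=
    AntipodalAux.reach_comp H (seq (k+1)) u _ hyu rfl
  have r4 : Relation.ReflTransGen (AntipodalAux.Ax (seq (k+1)))
      (AntipodalAux.p0 (seq (k+1))) (seq k) := hnfy ▸ hrtg (seq (k+1))
  have ryp : Relation.ReflTransGen (AntipodalAux.Ax (seq k))
      (seq (k+1)) (AntipodalAux.K c true (antipode u)) :=
    (AntipodalAux.rtg_symm r2).trans r1
  have rxp : Relation.ReflTransGen (AntipodalAux.Ax (seq (k+1)))
      (seq k) (AntipodalAux.K c true (antipode u)) :=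
    (AntipodalAux.rtg_symm r4).trans r3
  obtain ⟨W1, hW1⟩ := AntipodalAux.rtg_walk ryp (Ne.symm hne)
  obtain ⟨W2, hW2⟩ := AntipodalAux.rtg_walk rxp hne
  have hP1 : W1.bypass.IsPath := W1.bypass_isPath
  have hx1 : seq k ∉ W1.bypass.support := fun hm => hW1 (W1.support_bypass_subset hm)
  have hQ1 : (SimpleGraph.Walk.cons hadj1 W1.bypass).IsPath := by
    rw [SimpleGraph.Walk.cons_isPath_iff]
    exact ⟨hP1, hx1⟩
  have hQ2 : W2.bypass.IsPath := W2.bypass_isPath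
  have hy2 : seq (k+1) ∉ W2.bypass.support := fun hm => hW2 (W2.support_bypass_subset hm)
  have heq := hc.path_unique ⟨_, hQ1⟩ ⟨_, hQ2⟩
  have heqw : SimpleGraph.Walk.cons hadj1 W1.bypass = W2.bypass := congrArg Subtype.val heq
  apply hy2
  rw [← heqw]
  rw [SimpleGraph.Walk.support_cons]
  exact List.mem_cons_of_mem _ W1.bypass.start_mem_support
end
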